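/- Define ℓ : ℤ × ℤ → ℕ by ℓ(m,n) = 2(|m|+|n|) if m,n ≥ 0 or m,n ≤ 0, and ℓ(m,n) = 2·max(|m|,|n|) if m·n < 0. Then for every positive integer k, the number of pairs (m,n) ∈ ℤ × ℤ with ℓ(m,n) = 2k equals 6k, and there are no pairs with ℓ(m,n) odd. -/
import Mathlib


/-- Length function on the even part of the elliptic Weyl group of type
`A₁⁽¹'¹⁾*`. -/
def ellLen (p : ℤ × ℤ) : ℕ :=
  if 0 ≤ p.1 * p.2 then 2 * (p.1.natAbs + p.2.natAbs)
  else 2 * max p.1.natAbs p.2.natAbs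

lemma ellLen_eq_hex (p : ℤ × ℤ) :
    ellLen p = 2 * (max (max p.1.natAbs p.2.natAbs) (p.1 + p.2).natAbs) := by
  unfold ellLen
  split_ifs with h
  · rcases mul_nonneg_iff.mp h with ⟨h1, h2⟩ | ⟨h1, h2⟩ <;> omega
  · push_neg at h
    rcases mul_neg_iff.mp h with ⟨h1, h2⟩ | ⟨h1, h2⟩ <;> omega

/-- Parametrization of the hexagon boundary of radius `k`. -/
def hexG (k : ℕ) : ℕ × ℕ → ℤ × ℤ
  | (0, t) => ((k : ℤ) - t, (t : ℤ))
  | (1, t) => (-(t : ℤ), (k : ℤ))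
  | (2, t) => (-(k : ℤ), (k : ℤ) - t)
  | (3, t) => (-(k : ℤ) + t, -(t : ℤ))
  | (4, t) => ((t : ℤ), -(k : ℤ))
  | (_, t) => ((k : ℤ), -(k : ℤ) + t)

lemma hex_set_eq (k : ℕ) (hk : 0 < k) :
    {p : ℤ × ℤ | ellLen p = 2 * k}
      = hexG k '' ↑(Finset.range 6 ×ˢ Finset.range k) := by
  ext ⟨m, n⟩
  simp only [Set.mem_setOf_eq, Set.mem_image, Finset.coe_product,
    Finset.coe_range, Set.mem_prod, Set.mem_Iio, Prod.exists]
  rw [ellLen_eq_hex]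
  constructor
  · intro h
    replace h : max (max m.natAbs n.natAbs) (m + n).natAbs = k := by omega
    rcases le_or_gt 1 m with hm | hm
    · rcases le_or_gt 0 n with hn | hn
      · -- edge 0 : (k - t, t)
        exact ⟨0, n.toNat, ⟨by omega, by omega⟩, by simp [hexG]; constructor <;> omega⟩
      · rcases le_or_gt 0 (m + n) with hs | hs
        · -- edge 5 : (k, -k + t)
          exact ⟨5, (k + n).toNat, ⟨by omega, by omega⟩, by simp [hexG]; constructor <;> omega⟩
        · -- edge 4 : (t, -k)
          exact ⟨4, m.toNat, ⟨by omega, by omega⟩, by simp [hexG]; constructor <;> omega⟩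
    · rcases le_or_gt 1 (m + n) with hs | hs
      · -- edge 1 : (-t, k)
        exact ⟨1, (-m).toNat, ⟨by omega, by omega⟩, by simp [hexG]; constructor <;> omega⟩
      · rcases le_or_gt 1 n with hn | hn
        · rcases le_or_gt 0 m with hm0 | hm0
          · -- m = 0, n ≥ 1, m+n ≤ 0 impossible
            omega
          · -- edge 2 : (-k, k - t)
            exact ⟨2, (k - n).toNat, ⟨by omega, by omega⟩, by simp [hexG]; constructor <;> omega⟩
        · rcases le_or_gt 0 m with hm0 | hm0
          · -- m = 0, n ≤ 0: edge 3? m+n = -k, m ≤ 0 ... m = 0, edge 4: (t, -k), t = 0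
            exact ⟨4, m.toNat, ⟨by omega, by omega⟩, by simp [hexG]; constructor <;> omega⟩
          · -- edge 3 : (-k + t, -t)
            exact ⟨3, (-n).toNat, ⟨by omega, by omega⟩, by simp [hexG]; constructor <;> omega⟩
  · rintro ⟨e, t, ⟨he, ht⟩, heq⟩
    interval_cases e <;>
      simp [hexG, Prod.ext_iff] at heq <;> obtain ⟨h1, h2⟩ := heq <;> omega

lemma hex_injOn (k : ℕ) (hk : 0 < k) :
    Set.InjOn (hexG k) ↑(Finset.range 6 ×ˢ Finset.range k) := by
  rintro ⟨e1, t1⟩ h1 ⟨e2, t2⟩ h2 heq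
  simp only [Finset.coe_product, Finset.coe_range, Set.mem_prod, Set.mem_Iio] at h1 h2
  obtain ⟨he1, ht1⟩ := h1
  obtain ⟨he2, ht2⟩ := h2
  interval_cases e1 <;> interval_cases e2 <;>
    simp_all [hexG, Prod.ext_iff] <;> omega

theorem stmt9 :
    (∀ k : ℕ, 0 < k → {p : ℤ × ℤ | ellLen p = 2 * k}.ncard = 6 * k) ∧
    (∀ p : ℤ × ℤ, ¬ Odd (ellLen p)) := by
  constructor
  · intro k hk
    rw [hex_set_eq k hk, Set.ncard_image_of_injOn (hex_injOn k hk),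
      Set.ncard_coe_finset, Finset.card_product, Finset.card_range, Finset.card_range]
  · intro p
    rw [ellLen_eq_hex]
    simp [Nat.odd_iff]
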